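/- For every set A of natural numbers and every endomorphism φ : F → F (a map with φ(a * b) = φ(a) * φ(b) for all a, b ∈ F, φ(0) = 0, φ(p) = p), one has φ(S(A)) ⊆ S(A); in particular S(A) is closed under all substitutions of arbitrary elements of F for the generator letters. -/
import Mathlib


/-- Letters: `none` is the distinguished letter `p`, `some i` is the generator letter `xᵢ`. -/
abbrev Letter := Option ℕ

/-- The carrier of the free algebra: `0`, the letters, and the words
(pairs of a letter and a finite nonempty set of letters). -/
inductive F : Type
  | zero : F
  | letter : Letter → F
  | word : Letter → {Y : Finset Letter // Y.Nonempty} → F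

namespace F

/-- The binary operation `*` on `F`. -/
def mul : F → F → F
  | zero, _ => zero
  | _, zero => zero
  | _, word _ _ => zero
  | letter x, letter y => word x ⟨{y}, Finset.singleton_nonempty y⟩
  | word x Y, letter y =>
      if y ∈ Y.1 then zero
      else word x ⟨insert y Y.1, Finset.insert_nonempty y Y.1⟩

/-- The distinguished letter `p` as an element of `F`. -/
def p : F := letter none

/-- The generator letter `xᵢ` as an element of `F`. -/
def x (i : ℕ) : F := letter (some i)

end F

/-- For a set `A` of natural numbers, `S A` consists of `0` together with all words whose
first component is the letter `p` and whose length (`|Y| + 1`) lies in `A`. -/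
def S (A : Set ℕ) : Set F :=
  {f | f = F.zero ∨ ∃ Y : {Y : Finset Letter // Y.Nonempty},
    f = F.word none Y ∧ Y.1.card + 1 ∈ A}

lemma key_endo (φ : F → F)
    (hmul : ∀ a b : F, φ (F.mul a b) = F.mul (φ a) (φ b))
    (hp : φ F.p = F.p) :
    ∀ (Y : Finset Letter) (h : Y.Nonempty),
      φ (F.word none ⟨Y, h⟩) = F.zero ∨
        ∃ Y' : {Y : Finset Letter // Y.Nonempty},
          φ (F.word none ⟨Y, h⟩) = F.word none Y' ∧ Y'.1.card = Y.card := by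
  intro Y
  induction Y using Finset.induction_on with
  | empty => intro h; exact absurd h (by simp)
  | @insert a s ha ih =>
    intro h
    rcases s.eq_empty_or_nonempty with rfl | hs
    · have e : F.word none ⟨insert a ∅, h⟩ = F.mul F.p (F.letter a) := by
        exact congrArg (F.word none) (Subtype.ext (by simp))
      rw [e, hmul, hp]
      cases hc : φ (F.letter a) with
      | zero => left; rfl
      | letter z =>
        right
        exact ⟨⟨{z}, Finset.singleton_nonempty z⟩, rfl, by simp⟩
      | word z Z => left; rfl
    · have e : F.word none ⟨insert a s, h⟩ = F.mul (F.word none ⟨s, hs⟩) (F.letter a) := by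
        show _ = if a ∈ s then _ else _
        rw [if_neg ha]
      rw [e, hmul]
      rcases ih hs with h0 | ⟨Y', hY', hcard⟩
      · rw [h0]; left; cases φ (F.letter a) <;> rfl
      · rw [hY']
        cases hc : φ (F.letter a) with
        | zero => left; rfl
        | letter z =>
          by_cases hz : z ∈ Y'.1
          · left
            show (if z ∈ Y'.1 then F.zero else _) = F.zero
            rw [if_pos hz]
          · right
            refine ⟨⟨insert z Y'.1, Finset.insert_nonempty z Y'.1⟩, ?_, ?_⟩
            · show (if z ∈ Y'.1 then F.zero else _) = _
              rw [if_neg hz]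
            · rw [Finset.card_insert_of_notMem hz, hcard,
                Finset.card_insert_of_notMem ha]
        | word z Z => left; rfl

/-- For any `A ⊆ ℕ` and any endomorphism `φ` of `F`, `φ(S A) ⊆ S A`. -/
theorem stmt_7 (A : Set ℕ) (φ : F → F)
    (hmul : ∀ a b : F, φ (F.mul a b) = F.mul (φ a) (φ b))
    (hzero : φ F.zero = F.zero) (hp : φ F.p = F.p) :
    ∀ t ∈ S A, φ t ∈ S A := by
  rintro t (rfl | ⟨⟨Y, hY⟩, rfl, hA⟩)
  · exact Or.inl hzero
  · rcases key_endo φ hmul hp Y hY with h0 | ⟨Y', hY', hcard⟩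
    · exact Or.inl h0
    · exact Or.inr ⟨Y', hY', by rw [hcard]; exact hA⟩
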